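/- Let G be a C_3□P_2-free graph and let v_1,...,v_6 be six distinct vertices of G such that v_i and v_j are adjacent whenever 1 ≤ |i−j| ≤ 2 (a copy of P_6^2). Suppose G has two further vertices x and y outside {v_1,...,v_6} such that the neighbor set of x in {v_1,...,v_6} is {v_1,v_2,v_3,v_4} and the neighbor set of y in {v_1,...,v_6} is {v_1,v_3,v_5,v_6} (the configuration H_1). Then the number of edges of G with both endpoints in {v_1,...,v_6} is at most 10, with equality if and only if v_3v_6 is an edge of G. -/
import Mathlib

open SimpleGraph

/-- `CopyIn H G` means `G` contains a subgraph isomorphic to `H`,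
i.e. there is an injective graph homomorphism from `H` to `G`. -/
def CopyIn {α β : Type*} (H : SimpleGraph α) (G : SimpleGraph β) : Prop :=
  ∃ f : α ↪ β, ∀ a b, H.Adj a b → G.Adj (f a) (f b)

/-- The Turán number `ex(n, H)`: the maximum number of edges in an
`H`-free graph on `n` vertices. -/
noncomputable def exNum {α : Type*} (n : ℕ) (H : SimpleGraph α) : ℕ :=
  sSup {m : ℕ | ∃ G : SimpleGraph (Fin n), ¬ CopyIn H G ∧ G.edgeSet.ncard = m}

/-- The odd prism `C_{2k+1} □ P_2`. -/
def oddPrism (k : ℕ) : SimpleGraph (Fin (2 * k + 1) × Fin 2) :=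
  cycleGraph (2 * k + 1) □ pathGraph 2

/-- `P_6^2`, the square of the path on six vertices: `i` and `j` are adjacent
iff `1 ≤ |i - j| ≤ 2`. -/
def pathSq6 : SimpleGraph (Fin 6) :=
  SimpleGraph.fromRel (fun i j => (i : ℕ) < (j : ℕ) ∧ (j : ℕ) ≤ (i : ℕ) + 2)

instance : DecidableRel pathSq6.Adj := fun _ _ =>
  decidable_of_iff _ (SimpleGraph.fromRel_adj _ _ _).symm

instance : DecidableRel (pathGraph 2).Adj := fun _ _ =>
  decidable_of_iff _ (pathGraph_adj.symm)

instance : DecidableRel (oddPrism 1).Adj := fun _ _ =>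
  decidable_of_iff _ (boxProd_adj.symm)

/-- If `G` contains two triangles `a b c` and `d e f` joined by the perfect
matching `ad`, `be`, `cf` (on six distinct vertices), then `G` contains a copy
of the triangular prism. -/
lemma copyIn_prism {V : Type*} {G : SimpleGraph V} {a b c d e f : V}
    (hab : G.Adj a b) (hbc : G.Adj b c) (hac : G.Adj a c)
    (hde : G.Adj d e) (hef : G.Adj e f) (hdf : G.Adj d f)
    (had : G.Adj a d) (hbe : G.Adj b e) (hcf : G.Adj c f)
    (hae : a ≠ e) (haf : a ≠ f) (hbd : b ≠ d) (hbf : b ≠ f)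
    (hcd : c ≠ d) (hce : c ≠ e) :
    CopyIn (oddPrism 1) G := by
  have nab := hab.ne; have nbc := hbc.ne; have nac := hac.ne
  have nde := hde.ne; have nef := hef.ne; have ndf := hdf.ne
  have nad := had.ne; have nbe := hbe.ne; have ncf := hcf.ne
  refine ⟨⟨fun p => if p.2 = 0 then (if p.1 = 0 then a else if p.1 = 1 then b else c)
      else (if p.1 = 0 then d else if p.1 = 1 then e else f), ?_⟩, ?_⟩
  · intro p q h
    fin_cases p <;> fin_cases q <;> simp_all
  · intro p q h
    fin_cases p <;> fin_cases q <;> revert h <;>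
      first
      | (intro h; exact absurd h (by decide))
      | (intro _; simp only []; first
          | exact hab | exact hab.symm | exact hbc | exact hbc.symm
          | exact hac | exact hac.symm | exact hde | exact hde.symm
          | exact hef | exact hef.symm | exact hdf | exact hdf.symm
          | exact had | exact had.symm | exact hbe | exact hbe.symm
          | exact hcf | exact hcf.symm)

/-- The nine guaranteed edges of `P_6²`. -/
def baseEdges : Finset (Sym2 (Fin 6)) :=
  {s(0,1), s(0,2), s(1,2), s(1,3), s(2,3), s(2,4), s(3,4), s(3,5), s(4,5)}

/-- Configuration `H₁`: a copy `v` of `P_6²` in a `C_3□P_2`-free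
graph `G` together with outside vertices `x`, `y` whose neighbor sets in the copy are
`{v_1, v_2, v_3, v_4}` and `{v_1, v_3, v_5, v_6}` respectively. Then the copy spans
at most `10` edges of `G`, with equality iff `v_3 v_6` is an edge. -/
theorem config_H1_edge_bound {V : Type*} (G : SimpleGraph V)
    (hfree : ¬ CopyIn (oddPrism 1) G)
    (v : Fin 6 ↪ V) (hv : ∀ i j, pathSq6.Adj i j → G.Adj (v i) (v j))
    (x y : V) (hx : x ∉ Set.range v) (hy : y ∉ Set.range v)
    (hNx : {i : Fin 6 | G.Adj x (v i)} = {0, 1, 2, 3})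
    (hNy : {i : Fin 6 | G.Adj y (v i)} = {0, 2, 4, 5}) :
    (G.induce (Set.range v)).edgeSet.ncard ≤ 10 ∧
      ((G.induce (Set.range v)).edgeSet.ncard = 10 ↔ G.Adj (v 2) (v 5)) := by
  -- distinctness facts
  have vne : ∀ i j : Fin 6, i ≠ j → v i ≠ v j := fun i j hij => v.injective.ne hij
  have nxv : ∀ i : Fin 6, x ≠ v i := fun i h => hx ⟨i, h.symm⟩
  have nyv : ∀ i : Fin 6, y ≠ v i := fun i h => hy ⟨i, h.symm⟩
  -- the nine base adjacencies
  have h01 : G.Adj (v 0) (v 1) := hv 0 1 (by decide)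
  have h02 : G.Adj (v 0) (v 2) := hv 0 2 (by decide)
  have h12 : G.Adj (v 1) (v 2) := hv 1 2 (by decide)
  have h13 : G.Adj (v 1) (v 3) := hv 1 3 (by decide)
  have h23 : G.Adj (v 2) (v 3) := hv 2 3 (by decide)
  have h24 : G.Adj (v 2) (v 4) := hv 2 4 (by decide)
  have h34 : G.Adj (v 3) (v 4) := hv 3 4 (by decide)
  have h35 : G.Adj (v 3) (v 5) := hv 3 5 (by decide)
  have h45 : G.Adj (v 4) (v 5) := hv 4 5 (by decide)
  -- adjacencies of x and y
  have hxmem : ∀ i : Fin 6, i ∈ ({0, 1, 2, 3} : Set (Fin 6)) → G.Adj x (v i) := by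
    intro i hi
    exact (Set.ext_iff.mp hNx i).mpr hi
  have hymem : ∀ i : Fin 6, i ∈ ({0, 2, 4, 5} : Set (Fin 6)) → G.Adj y (v i) := by
    intro i hi
    exact (Set.ext_iff.mp hNy i).mpr hi
  have hx0 : G.Adj x (v 0) := hxmem 0 (by simp)
  have hx1 : G.Adj x (v 1) := hxmem 1 (by simp)
  have hx2 : G.Adj x (v 2) := hxmem 2 (by simp)
  have hx3 : G.Adj x (v 3) := hxmem 3 (by simp)
  have hy0 : G.Adj y (v 0) := hymem 0 (by simp)
  have hy2 : G.Adj y (v 2) := hymem 2 (by simp)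
  have hy4 : G.Adj y (v 4) := hymem 4 (by simp)
  have hy5 : G.Adj y (v 5) := hymem 5 (by simp)
  -- the five forbidden chords
  have n03 : ¬ G.Adj (v 0) (v 3) := fun h =>
    hfree (copyIn_prism h01 h13 h hy2 h24 hy4 hy0.symm h12 h34
      (vne 0 2 (by decide)) (vne 0 4 (by decide)) (nyv 1).symm
      (vne 1 4 (by decide)) (nyv 3).symm (vne 3 2 (by decide)))
  have n04 : ¬ G.Adj (v 0) (v 4) := fun h =>
    hfree (copyIn_prism h02 h24 h hx1.symm hx3 h13 h01 hx2.symm h34.symm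
      (nxv 0).symm (vne 0 3 (by decide)) (vne 2 1 (by decide))
      (vne 2 3 (by decide)) (vne 4 1 (by decide)) (nxv 4).symm)
  have n05 : ¬ G.Adj (v 0) (v 5) := fun h =>
    hfree (copyIn_prism h hy5.symm hy0.symm h13 h23.symm h12 h01 h35.symm hy2
      (vne 0 3 (by decide)) (vne 0 2 (by decide)) (vne 5 1 (by decide))
      (vne 5 2 (by decide)) (nyv 1) (nyv 3))
  have n14 : ¬ G.Adj (v 1) (v 4) := fun h =>
    hfree (copyIn_prism h13 h34 h hx0.symm hx2 h02 h01.symm hx3.symm h24.symm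
      (nxv 1).symm (vne 1 2 (by decide)) (vne 3 0 (by decide))
      (vne 3 2 (by decide)) (vne 4 0 (by decide)) (nxv 4).symm)
  have n15 : ¬ G.Adj (v 1) (v 5) := fun h =>
    hfree (copyIn_prism h13 h35 h h02 hy2.symm hy0.symm h01.symm h23.symm hy5.symm
      (vne 1 2 (by decide)) (nyv 1).symm (vne 3 0 (by decide))
      (nyv 3).symm (vne 5 0 (by decide)) (vne 5 2 (by decide)))
  -- transfer the edge count of the induced subgraph to `G.comap ⇑v`
  have hiso : G.comap ⇑v ≃g G.induce (Set.range ⇑v) :=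
    { toEquiv := Equiv.ofInjective ⇑v v.injective
      map_rel_iff' := Iff.rfl }
  have hcard : (G.induce (Set.range ⇑v)).edgeSet.ncard = (G.comap ⇑v).edgeSet.ncard := by
    rw [← Nat.card_coe_set_eq, ← Nat.card_coe_set_eq]
    exact Nat.card_congr hiso.mapEdgeSet.symm
  by_cases hA : G.Adj (v 2) (v 5)
  · -- exactly ten edges
    have hset : (G.comap ⇑v).edgeSet = ↑(insert s(2,5) baseEdges) := by
      apply Set.Subset.antisymm
      · intro e
        induction e using Sym2.ind with
        | _ i j =>
          intro h
          rw [mem_edgeSet, comap_adj] at h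
          fin_cases i <;> fin_cases j <;>
            first
            | exact absurd h (G.irrefl)
            | exact absurd h n03 | exact absurd h.symm n03
            | exact absurd h n04 | exact absurd h.symm n04
            | exact absurd h n05 | exact absurd h.symm n05
            | exact absurd h n14 | exact absurd h.symm n14
            | exact absurd h n15 | exact absurd h.symm n15
            | exact Finset.mem_coe.mpr (by decide)
      · intro e he
        rw [Finset.mem_coe] at he
        fin_cases he <;> rw [mem_edgeSet, comap_adj] <;>
          first
          | exact hA | exact h01 | exact h02 | exact h12 | exact h13
          | exact h23 | exact h24 | exact h34 | exact h35 | exact h45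
    have hten : (G.induce (Set.range ⇑v)).edgeSet.ncard = 10 := by
      rw [hcard, hset, Set.ncard_coe_finset]
      decide
    exact ⟨hten.le, by simp [hten, hA]⟩
  · -- exactly nine edges
    have hset : (G.comap ⇑v).edgeSet = ↑baseEdges := by
      apply Set.Subset.antisymm
      · intro e
        induction e using Sym2.ind with
        | _ i j =>
          intro h
          rw [mem_edgeSet, comap_adj] at h
          fin_cases i <;> fin_cases j <;>
            first
            | exact absurd h (G.irrefl)
            | exact absurd h n03 | exact absurd h.symm n03
            | exact absurd h n04 | exact absurd h.symm n04
            | exact absurd h n05 | exact absurd h.symm n05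
            | exact absurd h n14 | exact absurd h.symm n14
            | exact absurd h n15 | exact absurd h.symm n15
            | exact absurd h hA | exact absurd h.symm hA
            | exact Finset.mem_coe.mpr (by decide)
      · intro e he
        rw [Finset.mem_coe] at he
        fin_cases he <;> rw [mem_edgeSet, comap_adj] <;>
          first
          | exact h01 | exact h02 | exact h12 | exact h13
          | exact h23 | exact h24 | exact h34 | exact h35 | exact h45
    have hnine : (G.induce (Set.range ⇑v)).edgeSet.ncard = 9 := by
      rw [hcard, hset, Set.ncard_coe_finset]
      decide
    refine ⟨by omega, ?_⟩
    simp [hnine, hA]
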